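/- Let θ be a real number with cos θ > 0 and let h = cos θ + sin θ·i ∈ ℍ (the image in ℍ of a unit complex number with positive real part). Then every quaternion a splits uniquely as a = r + p·h, where r is a real number (regarded as a real quaternion) and p is a pure quaternion: there exists exactly one pair (r, p) ∈ ℝ × ℍ with the real part of p equal to 0 and a = r + p·h. -/

import Mathlib

open Quaternion

/-- The quaternion `h = cos θ + sin θ·i`, i.e. the image in `ℍ` of the complex
number `cos θ + sin θ·i`. -/
noncomputable def unitComplexQuat (θ : ℝ) : Quaternion ℝ :=
  ⟨Real.cos θ, Real.sin θ, 0, 0⟩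

/-- Let `h = cos θ + sin θ·i` with `cos θ > 0`. Every quaternion `a` splits
uniquely as `a = r + p·h` with `r` real and `p` a pure quaternion. -/
theorem quaternion_unique_splitting (θ : ℝ) (hθ : 0 < Real.cos θ) (a : Quaternion ℝ) :
    ∃! rp : ℝ × Quaternion ℝ, rp.2.re = 0 ∧
      a = (rp.1 : Quaternion ℝ) + rp.2 * unitComplexQuat θ := by
  have hc : Real.cos θ ≠ 0 := ne_of_gt hθ
  have hpyth : Real.sin θ ^ 2 + Real.cos θ ^ 2 = 1 := Real.sin_sq_add_cos_sq θ
  refine ⟨⟨a.re + a.imI * Real.sin θ / Real.cos θ,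
      ⟨0, a.imI / Real.cos θ,
        a.imJ * Real.cos θ - a.imK * Real.sin θ,
        a.imJ * Real.sin θ + a.imK * Real.cos θ⟩⟩, ⟨rfl, ?_⟩, ?_⟩
  · ext <;>
      simp only [unitComplexQuat, Quaternion.re_add, Quaternion.imI_add,
        Quaternion.imJ_add, Quaternion.imK_add, Quaternion.re_coe,
        Quaternion.imI_coe, Quaternion.imJ_coe, Quaternion.imK_coe,
        Quaternion.re_mul, Quaternion.imI_mul, Quaternion.imJ_mul,
        Quaternion.imK_mul] <;>
      erw [QuaternionAlgebra.mk_mul_mk] <;>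
      dsimp only <;>
      first
        | linear_combination (-a.imJ) * hpyth
        | linear_combination (-a.imK) * hpyth
        | (field_simp; ring)
  · rintro ⟨r, p⟩ ⟨hp, heq⟩
    dsimp only at hp heq ⊢
    have h1 : a.re = r + (p.re * Real.cos θ - p.imI * Real.sin θ) := by
      rw [heq]
      simp only [unitComplexQuat, Quaternion.re_add, Quaternion.re_coe,
        Quaternion.re_mul]
      erw [Quaternion.re_mul]
      ring
    have h2 : a.imI = p.re * Real.sin θ + p.imI * Real.cos θ := by
      rw [heq]
      simp only [unitComplexQuat, Quaternion.imI_add, Quaternion.imI_coe,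
        Quaternion.imI_mul]
      erw [Quaternion.imI_mul]
      ring
    have h3 : a.imJ = p.imJ * Real.cos θ + p.imK * Real.sin θ := by
      rw [heq]
      simp only [unitComplexQuat, Quaternion.imJ_add, Quaternion.imJ_coe,
        Quaternion.imJ_mul]
      erw [Quaternion.imJ_mul]
      ring
    have h4 : a.imK = -p.imJ * Real.sin θ + p.imK * Real.cos θ := by
      rw [heq]
      simp only [unitComplexQuat, Quaternion.imK_add, Quaternion.imK_coe,
        Quaternion.imK_mul]
      erw [Quaternion.imK_mul]
      ring
    have himI : p.imI = a.imI / Real.cos θ := by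
      rw [h2, hp]; field_simp; ring
    have himJ : p.imJ = a.imJ * Real.cos θ - a.imK * Real.sin θ := by
      linear_combination (-Real.cos θ) * h3 + Real.sin θ * h4 - p.imJ * hpyth
    have himK : p.imK = a.imJ * Real.sin θ + a.imK * Real.cos θ := by
      linear_combination (-Real.sin θ) * h3 - Real.cos θ * h4 - p.imK * hpyth
    have hr : r = a.re + a.imI * Real.sin θ / Real.cos θ := by
      rw [h1, hp, himI]; field_simp; ring
    refine Prod.ext hr ?_
    ext
    · exact hp
    · exact himI
    · exact himJ
    · exact himK
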